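/- arXiv:math/0108207 — 2 statements merged into one kernel-verified Lean document; each statement's English description precedes it below -/
import Mathlib

section
/- Let L be an invertible well-bred element of A_R ⊗ End(ℂᴺ) (i.e. L₁a₃ = R₃₁a₃L₁ and L₁a₃† = a₃†R₁₃L₁). Then c₁₂ := L₁⁻¹L₂⁻¹R₁₂L₁L₂ is central in A_R (its matrix entries commute with all aᵢ and aᵢ†), and moreover c₁₂⁻¹ = c₂₁. -/
open scoped BigOperators

noncomputable section

/-- Unitarity `R₁₂ R₂₁ = I` of the R-matrix, in components. -/
def UnitarityC (N : ℕ) (R : Fin N × Fin N → Fin N × Fin N → ℂ) : Prop :=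
  ∀ i j k l : Fin N,
    (∑ p : Fin N, ∑ q : Fin N, R (i, j) (p, q) * R (q, p) (l, k)) =
      if i = k ∧ j = l then 1 else 0

/-- The Yang–Baxter equation `R₁₂ R₁₃ R₂₃ = R₂₃ R₁₃ R₁₂`, in components. -/
def YBEC (N : ℕ) (R : Fin N × Fin N → Fin N × Fin N → ℂ) : Prop :=
  ∀ i j m k l n : Fin N,
    (∑ p : Fin N, ∑ q : Fin N, ∑ t : Fin N,
        R (i, j) (p, q) * R (p, m) (k, t) * R (q, t) (l, n)) =
      ∑ p : Fin N, ∑ q : Fin N, ∑ t : Fin N,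
        R (j, m) (q, t) * R (i, t) (p, n) * R (p, q) (k, l)

/-- The Zamolodchikov–Faddeev exchange relations
`a₁a₂ = R₂₁a₂a₁`, `a₁†a₂† = a₂†a₁†R₂₁`, `a₁a₂† = a₂†R₁₂a₁ + δ₁₂`,
in components, for generators `a i`, `ad i` of a `ℂ`-algebra `A`. -/
def IsZF (N : ℕ) {A : Type*} [Ring A] [Algebra ℂ A]
    (R : Fin N × Fin N → Fin N × Fin N → ℂ) (a ad : Fin N → A) : Prop :=
  (∀ i j : Fin N, a i * a j =
      ∑ k : Fin N, ∑ l : Fin N, R (j, i) (k, l) • (a k * a l)) ∧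
  (∀ i j : Fin N, ad i * ad j =
      ∑ k : Fin N, ∑ l : Fin N, R (k, l) (j, i) • (ad k * ad l)) ∧
  (∀ i j : Fin N, a i * ad j =
      (∑ k : Fin N, ∑ l : Fin N, R (i, k) (l, j) • (ad k * a l)) +
        if i = j then 1 else 0)

/-- The well-bred conditions `L₁a₂ = R₂₁a₂L₁` and `L₁a₂† = a₂†R₁₂L₁`,
in components, for `L ∈ A_R ⊗ End(ℂᴺ)`. -/
def IsWellBred (N : ℕ) {A : Type*} [Ring A] [Algebra ℂ A]
    (R : Fin N × Fin N → Fin N × Fin N → ℂ) (a ad : Fin N → A)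
    (L : Fin N → Fin N → A) : Prop :=
  (∀ i j m : Fin N, L i j * a m =
      ∑ p : Fin N, ∑ q : Fin N, R (m, i) (q, p) • (a q * L p j)) ∧
  (∀ i j m : Fin N, L i j * ad m =
      ∑ p : Fin N, ∑ q : Fin N, R (i, q) (p, m) • (ad q * L p j))

/-- The entries of `c₁₂ = L₁⁻¹L₂⁻¹R₁₂L₁L₂`, in components:
`c_{(i,m),(j,n)} = Σ R_{(p,q),(r,s)} (L⁻¹)ᵢₚ (L⁻¹)ₘq Lᵣⱼ Lₛₙ`. -/
def cMat (N : ℕ) {A : Type*} [Ring A] [Algebra ℂ A]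
    (R : Fin N × Fin N → Fin N × Fin N → ℂ) (L Linv : Fin N → Fin N → A)
    (i m j n : Fin N) : A :=
  ∑ p : Fin N, ∑ q : Fin N, ∑ r : Fin N, ∑ s : Fin N,
    R (p, q) (r, s) • (Linv i p * Linv m q * L r j * L s n)

/-- The entries of `c₂₁ = L₂⁻¹L₁⁻¹R₂₁L₂L₁`. -/
def c21Mat (N : ℕ) {A : Type*} [Ring A] [Algebra ℂ A]
    (R : Fin N × Fin N → Fin N × Fin N → ℂ) (L Linv : Fin N → Fin N → A)
    (i m j n : Fin N) : A :=
  ∑ p : Fin N, ∑ q : Fin N, ∑ r : Fin N, ∑ s : Fin N,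
    R (q, p) (s, r) • (Linv m q * Linv i p * L s n * L r j)


namespace CProof

variable {N : ℕ} {A : Type*} [Ring A] [Algebra ℂ A]

/-- scalar R matrix on spaces 1,2 -/
def Rmat (N : ℕ) (A : Type*) [Ring A] [Algebra ℂ A]
    (R : Fin N × Fin N → Fin N × Fin N → ℂ) :
    Matrix (Fin N × Fin N) (Fin N × Fin N) A := fun x y => R x y • 1

def RmatT (N : ℕ) (A : Type*) [Ring A] [Algebra ℂ A]
    (R : Fin N × Fin N → Fin N × Fin N → ℂ) :
    Matrix (Fin N × Fin N) (Fin N × Fin N) A :=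
  fun x y => R (x.2, x.1) (y.2, y.1) • 1

def L1mat (N : ℕ) {A : Type*} [Ring A] [Algebra ℂ A] (L : Fin N → Fin N → A) :
    Matrix (Fin N × Fin N) (Fin N × Fin N) A :=
  fun x y => if x.2 = y.2 then L x.1 y.1 else 0

def L2mat (N : ℕ) {A : Type*} [Ring A] [Algebra ℂ A] (L : Fin N → Fin N → A) :
    Matrix (Fin N × Fin N) (Fin N × Fin N) A :=
  fun x y => if x.1 = y.1 then L x.2 y.2 else 0

def Emat (N : ℕ) {A : Type*} [Ring A] [Algebra ℂ A]
    (X : Matrix (Fin N × Fin N) (Fin N × Fin N) A) :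
    Matrix ((Fin N × Fin N) × Fin N) ((Fin N × Fin N) × Fin N) A :=
  fun x y => if x.2 = y.2 then X x.1 y.1 else 0

def Avec (N : ℕ) {A : Type*} [Ring A] [Algebra ℂ A] (a : Fin N → A) :
    Matrix ((Fin N × Fin N) × Fin N) (Fin N × Fin N) A :=
  fun x y => if x.1 = y then a x.2 else 0

def R31mat (N : ℕ) (A : Type*) [Ring A] [Algebra ℂ A]
    (R : Fin N × Fin N → Fin N × Fin N → ℂ) :
    Matrix ((Fin N × Fin N) × Fin N) ((Fin N × Fin N) × Fin N) A :=
  fun x y => if x.1.2 = y.1.2 then R (x.2, x.1.1) (y.2, y.1.1) • 1 else 0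

def R32mat (N : ℕ) (A : Type*) [Ring A] [Algebra ℂ A]
    (R : Fin N × Fin N → Fin N × Fin N → ℂ) :
    Matrix ((Fin N × Fin N) × Fin N) ((Fin N × Fin N) × Fin N) A :=
  fun x y => if x.1.1 = y.1.1 then R (x.2, x.1.2) (y.2, y.1.2) • 1 else 0

def S13mat (N : ℕ) (A : Type*) [Ring A] [Algebra ℂ A]
    (R : Fin N × Fin N → Fin N × Fin N → ℂ) :
    Matrix ((Fin N × Fin N) × Fin N) ((Fin N × Fin N) × Fin N) A :=
  fun x y => if x.1.2 = y.1.2 then R (x.1.1, y.2) (y.1.1, x.2) • 1 else 0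

def S23mat (N : ℕ) (A : Type*) [Ring A] [Algebra ℂ A]
    (R : Fin N × Fin N → Fin N × Fin N → ℂ) :
    Matrix ((Fin N × Fin N) × Fin N) ((Fin N × Fin N) × Fin N) A :=
  fun x y => if x.1.1 = y.1.1 then R (x.1.2, y.2) (y.1.2, x.2) • 1 else 0

lemma Emat_mul (X Y : Matrix (Fin N × Fin N) (Fin N × Fin N) A) :
    Emat N X * Emat N Y = Emat N (X * Y) := by
  ext ⟨x, t⟩ ⟨y, u⟩
  simp [Emat, Matrix.mul_apply, Fintype.sum_prod_type]



variable (R : Fin N × Fin N → Fin N × Fin N → ℂ)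

lemma L1_unit (L Linv : Fin N → Fin N → A)
    (h : ∀ i j, (∑ k : Fin N, L i k * Linv k j) = if i = j then 1 else 0) :
    L1mat N L * L1mat N Linv = 1 := by
  ext ⟨i, m⟩ ⟨j, n⟩
  simp only [L1mat, Matrix.mul_apply, Fintype.sum_prod_type, Matrix.one_apply, mul_ite,
    ite_mul, zero_mul, mul_zero, Finset.sum_ite_eq, Finset.sum_ite_eq', Finset.mem_univ,
    if_true, Finset.sum_ite_irrel, Finset.sum_const_zero, Prod.mk.injEq]
  rw [h]
  by_cases h1 : m = n <;> by_cases h2 : i = j <;> simp [h1, h2]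

lemma L2_unit (L Linv : Fin N → Fin N → A)
    (h : ∀ i j, (∑ k : Fin N, L i k * Linv k j) = if i = j then 1 else 0) :
    L2mat N L * L2mat N Linv = 1 := by
  ext ⟨i, m⟩ ⟨j, n⟩
  simp only [L2mat, Matrix.mul_apply, Fintype.sum_prod_type, Matrix.one_apply, mul_ite,
    ite_mul, zero_mul, mul_zero, Finset.sum_ite_eq, Finset.sum_ite_eq', Finset.mem_univ,
    if_true, Finset.sum_ite_irrel, Finset.sum_const_zero, Prod.mk.injEq]
  rw [h]
  by_cases h1 : m = n <;> by_cases h2 : i = j <;> simp [h1, h2]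

lemma R_unit (hU : UnitarityC N R) : Rmat N A R * RmatT N A R = 1 := by
  ext ⟨i, m⟩ ⟨j, n⟩
  simp only [Rmat, RmatT, Matrix.mul_apply, Fintype.sum_prod_type, Matrix.one_apply,
    smul_mul_smul_comm, one_mul, ← Finset.sum_smul, Prod.mk.injEq]
  rw [hU i m j n]
  by_cases h1 : m = n <;> by_cases h2 : i = j <;> simp [h1, h2]

lemma RT_unit (hU : UnitarityC N R) : RmatT N A R * Rmat N A R = 1 := by
  ext ⟨i, m⟩ ⟨j, n⟩
  simp only [Rmat, RmatT, Matrix.mul_apply, Fintype.sum_prod_type, Matrix.one_apply,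
    smul_mul_smul_comm, one_mul, ← Finset.sum_smul, Prod.mk.injEq]
  rw [Finset.sum_comm, hU m i n j]
  by_cases h1 : m = n <;> by_cases h2 : i = j <;> simp [h1, h2, and_comm]

variable {R} in
lemma comm_L1_R32 (X : Fin N → Fin N → A) :
    Emat N (L1mat N X) * R32mat N A R = R32mat N A R * Emat N (L1mat N X) := by
  ext ⟨⟨i, m⟩, t⟩ ⟨⟨j, n⟩, u⟩
  simp only [Emat, L1mat, R32mat, Matrix.mul_apply, Fintype.sum_prod_type, mul_ite, ite_mul,
    zero_mul, mul_zero, smul_mul_assoc, mul_smul_comm, one_mul, mul_one, Finset.sum_ite_eq,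
    Finset.sum_ite_eq', Finset.mem_univ, if_true, Finset.sum_ite_irrel, Finset.sum_const_zero,
    smul_ite, smul_zero]

variable {R} in
lemma comm_L2_R31 (X : Fin N → Fin N → A) :
    Emat N (L2mat N X) * R31mat N A R = R31mat N A R * Emat N (L2mat N X) := by
  ext ⟨⟨i, m⟩, t⟩ ⟨⟨j, n⟩, u⟩
  simp only [Emat, L2mat, R31mat, Matrix.mul_apply, Fintype.sum_prod_type, mul_ite, ite_mul,
    zero_mul, mul_zero, smul_mul_assoc, mul_smul_comm, one_mul, mul_one, Finset.sum_ite_eq,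
    Finset.sum_ite_eq', Finset.mem_univ, if_true, Finset.sum_ite_irrel, Finset.sum_const_zero,
    smul_ite, smul_zero]

variable {R} in
lemma comm_L1_S23 (X : Fin N → Fin N → A) :
    Emat N (L1mat N X) * S23mat N A R = S23mat N A R * Emat N (L1mat N X) := by
  ext ⟨⟨i, m⟩, t⟩ ⟨⟨j, n⟩, u⟩
  simp only [Emat, L1mat, S23mat, Matrix.mul_apply, Fintype.sum_prod_type, mul_ite, ite_mul,
    zero_mul, mul_zero, smul_mul_assoc, mul_smul_comm, one_mul, mul_one, Finset.sum_ite_eq,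
    Finset.sum_ite_eq', Finset.mem_univ, if_true, Finset.sum_ite_irrel, Finset.sum_const_zero,
    smul_ite, smul_zero]

variable {R} in
lemma comm_L2_S13 (X : Fin N → Fin N → A) :
    Emat N (L2mat N X) * S13mat N A R = S13mat N A R * Emat N (L2mat N X) := by
  ext ⟨⟨i, m⟩, t⟩ ⟨⟨j, n⟩, u⟩
  simp only [Emat, L2mat, S13mat, Matrix.mul_apply, Fintype.sum_prod_type, mul_ite, ite_mul,
    zero_mul, mul_zero, smul_mul_assoc, mul_smul_comm, one_mul, mul_one, Finset.sum_ite_eq,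
    Finset.sum_ite_eq', Finset.mem_univ, if_true, Finset.sum_ite_irrel, Finset.sum_const_zero,
    smul_ite, smul_zero]

variable {R} in
lemma comm_R_A (v : Fin N → A) :
    Emat N (Rmat N A R) * Avec N v = Avec N v * Rmat N A R := by
  ext ⟨⟨i, m⟩, t⟩ ⟨j, n⟩
  simp only [Emat, Rmat, Avec, Matrix.mul_apply, Fintype.sum_prod_type, mul_ite, ite_mul,
    zero_mul, mul_zero, smul_mul_assoc, mul_smul_comm, one_mul, mul_one, Finset.sum_ite_eq,
    Finset.sum_ite_eq', Finset.mem_univ, if_true, Finset.sum_ite_irrel, Finset.sum_const_zero,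
    smul_ite, smul_zero]

variable {R} in
lemma wb_a_L1 (L : Fin N → Fin N → A) (a : Fin N → A)
    (h : ∀ i j m : Fin N, L i j * a m =
      ∑ p : Fin N, ∑ q : Fin N, R (m, i) (q, p) • (a q * L p j)) :
    Emat N (L1mat N L) * Avec N a = R31mat N A R * (Avec N a * L1mat N L) := by
  ext ⟨⟨i, m⟩, t⟩ ⟨j, n⟩
  simp only [Emat, L1mat, R31mat, Avec, Matrix.mul_apply, Fintype.sum_prod_type, mul_ite,
    ite_mul, zero_mul, mul_zero, smul_mul_assoc, mul_smul_comm, one_mul, mul_one,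
    Finset.sum_ite_eq, Finset.sum_ite_eq', Finset.mem_univ, if_true, Finset.sum_ite_irrel,
    Finset.sum_const_zero, smul_ite, smul_zero, Prod.mk.injEq, ite_and]
  rw [h i j t]

variable {R} in
lemma wb_a_L2 (L : Fin N → Fin N → A) (a : Fin N → A)
    (h : ∀ i j m : Fin N, L i j * a m =
      ∑ p : Fin N, ∑ q : Fin N, R (m, i) (q, p) • (a q * L p j)) :
    Emat N (L2mat N L) * Avec N a = R32mat N A R * (Avec N a * L2mat N L) := by
  ext ⟨⟨i, m⟩, t⟩ ⟨j, n⟩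
  simp only [Emat, L2mat, R32mat, Avec, Matrix.mul_apply, Fintype.sum_prod_type, mul_ite,
    ite_mul, zero_mul, mul_zero, smul_mul_assoc, mul_smul_comm, one_mul, mul_one,
    Finset.sum_ite_eq, Finset.sum_ite_eq', Finset.mem_univ, if_true, Finset.sum_ite_irrel,
    Finset.sum_const_zero, smul_ite, smul_zero, Prod.mk.injEq, ite_and]
  rw [h m n t]

variable {R} in
lemma wb_ad_L1 (L : Fin N → Fin N → A) (ad : Fin N → A)
    (h : ∀ i j m : Fin N, L i j * ad m =
      ∑ p : Fin N, ∑ q : Fin N, R (i, q) (p, m) • (ad q * L p j)) :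
    Emat N (L1mat N L) * Avec N ad = S13mat N A R * (Avec N ad * L1mat N L) := by
  ext ⟨⟨i, m⟩, t⟩ ⟨j, n⟩
  simp only [Emat, L1mat, S13mat, Avec, Matrix.mul_apply, Fintype.sum_prod_type, mul_ite,
    ite_mul, zero_mul, mul_zero, smul_mul_assoc, mul_smul_comm, one_mul, mul_one,
    Finset.sum_ite_eq, Finset.sum_ite_eq', Finset.mem_univ, if_true, Finset.sum_ite_irrel,
    Finset.sum_const_zero, smul_ite, smul_zero, Prod.mk.injEq, ite_and]
  rw [h i j t]

variable {R} in
lemma wb_ad_L2 (L : Fin N → Fin N → A) (ad : Fin N → A)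
    (h : ∀ i j m : Fin N, L i j * ad m =
      ∑ p : Fin N, ∑ q : Fin N, R (i, q) (p, m) • (ad q * L p j)) :
    Emat N (L2mat N L) * Avec N ad = S23mat N A R * (Avec N ad * L2mat N L) := by
  ext ⟨⟨i, m⟩, t⟩ ⟨j, n⟩
  simp only [Emat, L2mat, S23mat, Avec, Matrix.mul_apply, Fintype.sum_prod_type, mul_ite,
    ite_mul, zero_mul, mul_zero, smul_mul_assoc, mul_smul_comm, one_mul, mul_one,
    Finset.sum_ite_eq, Finset.sum_ite_eq', Finset.mem_univ, if_true, Finset.sum_ite_irrel,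
    Finset.sum_const_zero, smul_ite, smul_zero, Prod.mk.injEq, ite_and]
  rw [h m n t]

private lemma sum_rot (f : Fin N → Fin N → Fin N → ℂ) :
    (∑ p : Fin N, ∑ q : Fin N, ∑ r : Fin N, f p q r) =
      ∑ r : Fin N, ∑ p : Fin N, ∑ q : Fin N, f p q r :=
  calc (∑ p : Fin N, ∑ q : Fin N, ∑ r : Fin N, f p q r)
      = ∑ p : Fin N, ∑ r : Fin N, ∑ q : Fin N, f p q r :=
        Finset.sum_congr rfl fun _ _ => Finset.sum_comm
  _ = ∑ r : Fin N, ∑ p : Fin N, ∑ q : Fin N, f p q r := Finset.sum_comm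

variable {R} in
lemma ybe_R (hY : YBEC N R) :
    Emat N (Rmat N A R) * (R32mat N A R * R31mat N A R) =
      R31mat N A R * (R32mat N A R * Emat N (Rmat N A R)) := by
  ext ⟨⟨i, m⟩, t⟩ ⟨⟨j, n⟩, u⟩
  simp only [Emat, Rmat, R31mat, R32mat, Matrix.mul_apply, Fintype.sum_prod_type, mul_ite,
    ite_mul, zero_mul, mul_zero, smul_mul_smul_comm, smul_mul_assoc, mul_smul_comm, one_mul,
    mul_one, Finset.sum_ite_eq, Finset.sum_ite_eq', Finset.mem_univ, if_true,
    Finset.sum_ite_irrel, Finset.sum_const_zero, smul_ite, smul_zero, Prod.mk.injEq, ite_and,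
    smul_smul, ← Finset.sum_smul]
  congr 1
  calc
    (∑ p : Fin N, ∑ q : Fin N, (∑ r : Fin N, R (r, p) (u, j) * R (t, q) (r, n)) * R (i, m) (p, q))
        = ∑ p : Fin N, ∑ q : Fin N, ∑ r : Fin N,
            R (i, m) (p, q) * R (t, q) (r, n) * R (r, p) (u, j) := by
          simp only [Finset.sum_mul]
          exact Finset.sum_congr rfl fun p _ => Finset.sum_congr rfl fun q _ =>
            Finset.sum_congr rfl fun r _ => by ring
    _ = ∑ r : Fin N, ∑ p : Fin N, ∑ q : Fin N,
            R (i, m) (p, q) * R (t, q) (r, n) * R (r, p) (u, j) := sum_rot _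
    _ = ∑ p : Fin N, ∑ q : Fin N, ∑ r : Fin N,
            R (t, i) (p, q) * R (p, m) (u, r) * R (q, r) (j, n) := (hY t i m u j n).symm
    _ = ∑ p : Fin N, ∑ q : Fin N, (∑ r : Fin N, R (p, r) (j, n) * R (q, m) (u, r)) * R (t, i) (q, p) := by
          rw [Finset.sum_comm]
          refine Finset.sum_congr rfl fun p _ => Finset.sum_congr rfl fun q _ => ?_
          rw [Finset.sum_mul]
          exact Finset.sum_congr rfl fun r _ => by ring

variable {R} in
lemma ybe_S (hY : YBEC N R) :
    Emat N (Rmat N A R) * (S23mat N A R * S13mat N A R) =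
      S13mat N A R * (S23mat N A R * Emat N (Rmat N A R)) := by
  ext ⟨⟨i, m⟩, t⟩ ⟨⟨j, n⟩, u⟩
  simp only [Emat, Rmat, S13mat, S23mat, Matrix.mul_apply, Fintype.sum_prod_type, mul_ite,
    ite_mul, zero_mul, mul_zero, smul_mul_smul_comm, smul_mul_assoc, mul_smul_comm, one_mul,
    mul_one, Finset.sum_ite_eq, Finset.sum_ite_eq', Finset.mem_univ, if_true,
    Finset.sum_ite_irrel, Finset.sum_const_zero, smul_ite, smul_zero, Prod.mk.injEq, ite_and,
    smul_smul, ← Finset.sum_smul]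
  congr 1
  calc
    (∑ p : Fin N, ∑ q : Fin N, (∑ r : Fin N, R (p, u) (j, r) * R (q, r) (n, t)) * R (i, m) (p, q))
        = ∑ p : Fin N, ∑ q : Fin N, ∑ r : Fin N,
            R (i, m) (p, q) * R (p, u) (j, r) * R (q, r) (n, t) := by
          simp only [Finset.sum_mul]
          exact Finset.sum_congr rfl fun p _ => Finset.sum_congr rfl fun q _ =>
            Finset.sum_congr rfl fun r _ => by ring
    _ = ∑ p : Fin N, ∑ q : Fin N, ∑ r : Fin N,
            R (m, u) (q, r) * R (i, r) (p, t) * R (p, q) (j, n) := hY i m u j n t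
    _ = ∑ p : Fin N, ∑ r : Fin N, ∑ q : Fin N,
            R (m, u) (q, r) * R (i, r) (p, t) * R (p, q) (j, n) :=
          Finset.sum_congr rfl fun _ _ => Finset.sum_comm
    _ = ∑ p : Fin N, ∑ q : Fin N, (∑ r : Fin N, R (p, r) (j, n) * R (m, u) (r, q)) * R (i, q) (p, t) := by
          refine Finset.sum_congr rfl fun p _ => Finset.sum_congr rfl fun q _ => ?_
          rw [Finset.sum_mul]
          exact Finset.sum_congr rfl fun r _ => by ring

lemma Emat_one : Emat N (1 : Matrix (Fin N × Fin N) (Fin N × Fin N) A) = 1 := by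
  ext ⟨x, t⟩ ⟨y, u⟩
  simp only [Emat, Matrix.one_apply, Prod.mk.injEq]
  split_ifs <;> simp_all

lemma inv_push (M Minv : Matrix (Fin N × Fin N) (Fin N × Fin N) A)
    (X3 : Matrix ((Fin N × Fin N) × Fin N) ((Fin N × Fin N) × Fin N) A)
    (v : Fin N → A)
    (h : Emat N M * Avec N v = X3 * (Avec N v * M))
    (h1 : M * Minv = 1) (h2 : Minv * M = 1) :
    Emat N Minv * (X3 * Avec N v) = Avec N v * Minv := by
  have e1 : Emat N Minv * Emat N M = 1 := by rw [Emat_mul, h2, Emat_one]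
  have e2 : X3 * Avec N v = Emat N M * Avec N v * Minv := by
    rw [h, Matrix.mul_assoc, Matrix.mul_assoc, h1, Matrix.mul_one]
  rw [e2, ← Matrix.mul_assoc, ← Matrix.mul_assoc, e1, Matrix.one_mul]

variable {R} in
lemma central_generic (L Linv : Fin N → Fin N → A) (v : Fin N → A)
    (X3 Y3 : Matrix ((Fin N × Fin N) × Fin N) ((Fin N × Fin N) × Fin N) A)
    (h1 : Emat N (L1mat N L) * Avec N v = X3 * (Avec N v * L1mat N L))
    (h2 : Emat N (L2mat N L) * Avec N v = Y3 * (Avec N v * L2mat N L))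
    (hc1 : Emat N (L1mat N L) * Y3 = Y3 * Emat N (L1mat N L))
    (hc2 : Emat N (L2mat N Linv) * X3 = X3 * Emat N (L2mat N Linv))
    (hRA : Emat N (Rmat N A R) * Avec N v = Avec N v * Rmat N A R)
    (hY3 : Emat N (Rmat N A R) * (Y3 * X3) = X3 * (Y3 * Emat N (Rmat N A R)))
    (hi1 : L1mat N L * L1mat N Linv = 1) (hi1' : L1mat N Linv * L1mat N L = 1)
    (hi2 : L2mat N L * L2mat N Linv = 1) (hi2' : L2mat N Linv * L2mat N L = 1) :
    Emat N (L1mat N Linv * (L2mat N Linv * (Rmat N A R * (L1mat N L * L2mat N L)))) * Avec N v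
      = Avec N v * (L1mat N Linv * (L2mat N Linv * (Rmat N A R * (L1mat N L * L2mat N L)))) := by
  have iw1 : Emat N (L1mat N Linv) * (X3 * Avec N v) = Avec N v * L1mat N Linv :=
    inv_push _ _ _ _ h1 hi1 hi1'
  have iw2 : Emat N (L2mat N Linv) * (Y3 * Avec N v) = Avec N v * L2mat N Linv :=
    inv_push _ _ _ _ h2 hi2 hi2'
  set K1 := L1mat N L with hK1
  set K2 := L2mat N L with hK2
  set J1 := L1mat N Linv with hJ1
  set J2 := L2mat N Linv with hJ2
  set Rs := Rmat N A R with hRs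
  set Av := Avec N v with hAv
  calc Emat N (J1 * (J2 * (Rs * (K1 * K2)))) * Av
      = Emat N J1 * (Emat N J2 * (Emat N Rs * (Emat N K1 * (Emat N K2 * Av)))) := by
        simp only [← Emat_mul, Matrix.mul_assoc]
    _ = Emat N J1 * (Emat N J2 * (Emat N Rs * (Emat N K1 * (Y3 * (Av * K2))))) := by rw [h2]
    _ = Emat N J1 * (Emat N J2 * (Emat N Rs * (Y3 * (Emat N K1 * (Av * K2))))) := by
        rw [← Matrix.mul_assoc (Emat N K1) Y3, hc1, Matrix.mul_assoc]
    _ = Emat N J1 * (Emat N J2 * (Emat N Rs * (Y3 * (X3 * ((Av * K1) * K2))))) := by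
        rw [← Matrix.mul_assoc (Emat N K1) Av, h1, Matrix.mul_assoc]
    _ = Emat N J1 * (Emat N J2 * (X3 * (Y3 * (Emat N Rs * ((Av * K1) * K2))))) := by
        rw [← Matrix.mul_assoc Y3 X3, ← Matrix.mul_assoc (Emat N Rs) (Y3 * X3), hY3,
          Matrix.mul_assoc X3 (Y3 * Emat N Rs), Matrix.mul_assoc Y3 (Emat N Rs)]
    _ = Emat N J1 * (Emat N J2 * (X3 * (Y3 * ((Av * Rs) * (K1 * K2))))) := by
        rw [Matrix.mul_assoc Av K1 K2, ← Matrix.mul_assoc (Emat N Rs) Av, hRA]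
    _ = Emat N J1 * (X3 * (Emat N J2 * (Y3 * ((Av * Rs) * (K1 * K2))))) := by
        rw [← Matrix.mul_assoc (Emat N J2) X3, hc2, Matrix.mul_assoc]
    _ = Emat N J1 * (X3 * (Emat N J2 * (((Y3 * Av) * Rs) * (K1 * K2)))) := by
        rw [← Matrix.mul_assoc Y3 (Av * Rs), ← Matrix.mul_assoc Y3 Av Rs]
    _ = Emat N J1 * (X3 * (((Emat N J2 * (Y3 * Av)) * Rs) * (K1 * K2))) := by
        rw [← Matrix.mul_assoc (Emat N J2) ((Y3 * Av) * Rs),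
          ← Matrix.mul_assoc (Emat N J2) (Y3 * Av) Rs]
    _ = Emat N J1 * (X3 * (((Av * J2) * Rs) * (K1 * K2))) := by rw [iw2]
    _ = Emat N J1 * ((((X3 * Av) * J2) * Rs) * (K1 * K2)) := by
        rw [← Matrix.mul_assoc X3 (Av * J2 * Rs), ← Matrix.mul_assoc X3 (Av * J2) Rs,
          ← Matrix.mul_assoc X3 Av J2]
    _ = (((Emat N J1 * (X3 * Av)) * J2) * Rs) * (K1 * K2) := by
        rw [← Matrix.mul_assoc (Emat N J1) (X3 * Av * J2 * Rs),
          ← Matrix.mul_assoc (Emat N J1) (X3 * Av * J2) Rs,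
          ← Matrix.mul_assoc (Emat N J1) (X3 * Av) J2]
    _ = (((Av * J1) * J2) * Rs) * (K1 * K2) := by rw [iw1]
    _ = Av * (J1 * (J2 * (Rs * (K1 * K2)))) := by simp only [Matrix.mul_assoc]

lemma entry_extract (C : Matrix (Fin N × Fin N) (Fin N × Fin N) A) (v : Fin N → A)
    (h : Emat N C * Avec N v = Avec N v * C) (z y : Fin N × Fin N) (t : Fin N) :
    C z y * v t = v t * C z y := by
  have h2 := congrFun (congrFun h (z, t)) y
  simpa [Emat, Avec, Matrix.mul_apply, Fintype.sum_prod_type, mul_ite, ite_mul, zero_mul,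
    mul_zero, Finset.sum_ite_eq, Finset.sum_ite_eq', Finset.sum_ite_irrel,
    Finset.sum_const_zero, Prod.mk.injEq, ite_and] using h2

variable {R} in
lemma cMat_eq (L Linv : Fin N → Fin N → A) (i m j n : Fin N) :
    cMat N R L Linv i m j n =
      (L1mat N Linv * (L2mat N Linv * (Rmat N A R * (L1mat N L * L2mat N L))))
        (i, m) (j, n) := by
  simp only [cMat, Matrix.mul_apply, Fintype.sum_prod_type, L1mat, L2mat, Rmat, mul_ite,
    ite_mul, zero_mul, mul_zero, smul_mul_assoc, mul_smul_comm, one_mul, mul_one,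
    Finset.sum_ite_eq, Finset.sum_ite_eq', Finset.mem_univ, if_true, Finset.sum_ite_irrel,
    Finset.sum_const_zero, smul_ite, smul_zero, Prod.mk.injEq, ite_and, Finset.mul_sum,
    mul_assoc]

variable {R} in
lemma c21Mat_eq (L Linv : Fin N → Fin N → A) (i m j n : Fin N) :
    c21Mat N R L Linv i m j n =
      (L2mat N Linv * (L1mat N Linv * (RmatT N A R * (L2mat N L * L1mat N L))))
        (i, m) (j, n) := by
  simp only [c21Mat, Matrix.mul_apply, Fintype.sum_prod_type, L1mat, L2mat, RmatT, mul_ite,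
    ite_mul, zero_mul, mul_zero, smul_mul_assoc, mul_smul_comm, one_mul, mul_one,
    Finset.sum_ite_eq, Finset.sum_ite_eq', Finset.mem_univ, if_true, Finset.sum_ite_irrel,
    Finset.sum_const_zero, smul_ite, smul_zero, Prod.mk.injEq, ite_and, Finset.mul_sum,
    mul_assoc]
  exact Finset.sum_comm

omit [Algebra ℂ A] in
lemma cancel_head {n : Type*} [Fintype n] [DecidableEq n]
    (X Y : Matrix n n A) (h : X * Y = 1) (W : Matrix n n A) : X * (Y * W) = W := by
  rw [← Matrix.mul_assoc, h, Matrix.one_mul]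

variable {R} in
lemma C_mul_C21 (hU : UnitarityC N R) (L Linv : Fin N → Fin N → A)
    (hi1 : L1mat N L * L1mat N Linv = 1) (hi1' : L1mat N Linv * L1mat N L = 1)
    (hi2 : L2mat N L * L2mat N Linv = 1) (hi2' : L2mat N Linv * L2mat N L = 1) :
    (L1mat N Linv * (L2mat N Linv * (Rmat N A R * (L1mat N L * L2mat N L)))) *
      (L2mat N Linv * (L1mat N Linv * (RmatT N A R * (L2mat N L * L1mat N L)))) = 1 := by
  simp only [Matrix.mul_assoc]
  rw [cancel_head _ _ hi2, cancel_head _ _ hi1, cancel_head _ _ (R_unit R hU),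
    cancel_head _ _ hi2', hi1']

variable {R} in
lemma C21_mul_C (hU : UnitarityC N R) (L Linv : Fin N → Fin N → A)
    (hi1 : L1mat N L * L1mat N Linv = 1) (hi1' : L1mat N Linv * L1mat N L = 1)
    (hi2 : L2mat N L * L2mat N Linv = 1) (hi2' : L2mat N Linv * L2mat N L = 1) :
    (L2mat N Linv * (L1mat N Linv * (RmatT N A R * (L2mat N L * L1mat N L)))) *
      (L1mat N Linv * (L2mat N Linv * (Rmat N A R * (L1mat N L * L2mat N L)))) = 1 := by
  simp only [Matrix.mul_assoc]
  rw [cancel_head _ _ hi1, cancel_head _ _ hi2, cancel_head _ _ (RT_unit R hU),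
    cancel_head _ _ hi1', hi2']

end CProof
/-- For an invertible well-bred `L ∈ A_R ⊗ End(ℂᴺ)`, the element
`c₁₂ = L₁⁻¹L₂⁻¹R₁₂L₁L₂` is central in `A_R` (its matrix entries commute
with all `aᵢ, aᵢ†`), and `c₁₂⁻¹ = c₂₁`. -/
theorem c12_central_and_inverse (N : ℕ) {A : Type*} [Ring A] [Algebra ℂ A]
    (R : Fin N × Fin N → Fin N × Fin N → ℂ)
    (hYBE : YBEC N R) (hU : UnitarityC N R)
    (a ad : Fin N → A) (hZF : IsZF N R a ad)
    (L Linv : Fin N → Fin N → A)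
    (hLinv₁ : ∀ i j, (∑ k : Fin N, L i k * Linv k j) = if i = j then 1 else 0)
    (hLinv₂ : ∀ i j, (∑ k : Fin N, Linv i k * L k j) = if i = j then 1 else 0)
    (hwb : IsWellBred N R a ad L) :
    (∀ i m j n t : Fin N,
        cMat N R L Linv i m j n * a t = a t * cMat N R L Linv i m j n ∧
        cMat N R L Linv i m j n * ad t = ad t * cMat N R L Linv i m j n) ∧
    (∀ i m j n : Fin N,
        (∑ p : Fin N, ∑ q : Fin N,
            cMat N R L Linv i m p q * c21Mat N R L Linv p q j n) =
          if i = j ∧ m = n then 1 else 0) ∧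
    (∀ i m j n : Fin N,
        (∑ p : Fin N, ∑ q : Fin N,
            c21Mat N R L Linv i m p q * cMat N R L Linv p q j n) =
          if i = j ∧ m = n then 1 else 0) := by
  classical
  obtain ⟨hwb1, hwb2⟩ := hwb
  have hi1 : CProof.L1mat N L * CProof.L1mat N Linv = 1 := CProof.L1_unit L Linv hLinv₁
  have hi1' : CProof.L1mat N Linv * CProof.L1mat N L = 1 := CProof.L1_unit Linv L hLinv₂
  have hi2 : CProof.L2mat N L * CProof.L2mat N Linv = 1 := CProof.L2_unit L Linv hLinv₁
  have hi2' : CProof.L2mat N Linv * CProof.L2mat N L = 1 := CProof.L2_unit Linv L hLinv₂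
  have cenA := CProof.central_generic (R := R) L Linv a
    (CProof.R31mat N A R) (CProof.R32mat N A R)
    (CProof.wb_a_L1 L a hwb1) (CProof.wb_a_L2 L a hwb1)
    (CProof.comm_L1_R32 L) (CProof.comm_L2_R31 Linv)
    (CProof.comm_R_A a) (CProof.ybe_R hYBE) hi1 hi1' hi2 hi2'
  have cenAd := CProof.central_generic (R := R) L Linv ad
    (CProof.S13mat N A R) (CProof.S23mat N A R)
    (CProof.wb_ad_L1 L ad hwb2) (CProof.wb_ad_L2 L ad hwb2)
    (CProof.comm_L1_S23 L) (CProof.comm_L2_S13 Linv)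
    (CProof.comm_R_A ad) (CProof.ybe_S hYBE) hi1 hi1' hi2 hi2'
  have hCC := CProof.C_mul_C21 (R := R) hU L Linv hi1 hi1' hi2 hi2'
  have hCC' := CProof.C21_mul_C (R := R) hU L Linv hi1 hi1' hi2 hi2'
  refine ⟨?_, ?_, ?_⟩
  · intro i m j n t
    constructor
    · rw [CProof.cMat_eq (R := R) L Linv i m j n]
      exact CProof.entry_extract _ a cenA (i, m) (j, n) t
    · rw [CProof.cMat_eq (R := R) L Linv i m j n]
      exact CProof.entry_extract _ ad cenAd (i, m) (j, n) t
  · intro i m j n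
    calc (∑ p : Fin N, ∑ q : Fin N,
            cMat N R L Linv i m p q * c21Mat N R L Linv p q j n)
        = ((CProof.L1mat N Linv * (CProof.L2mat N Linv *
              (CProof.Rmat N A R * (CProof.L1mat N L * CProof.L2mat N L)))) *
            (CProof.L2mat N Linv * (CProof.L1mat N Linv *
              (CProof.RmatT N A R * (CProof.L2mat N L * CProof.L1mat N L)))))
            (i, m) (j, n) := by
          rw [Matrix.mul_apply, Fintype.sum_prod_type]
          exact Finset.sum_congr rfl fun p _ => Finset.sum_congr rfl fun q _ => by
            rw [CProof.cMat_eq (R := R), CProof.c21Mat_eq (R := R)]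
      _ = (1 : Matrix (Fin N × Fin N) (Fin N × Fin N) A) (i, m) (j, n) := by rw [hCC]
      _ = if i = j ∧ m = n then 1 else 0 := by
          simp [Matrix.one_apply, Prod.ext_iff]
  · intro i m j n
    calc (∑ p : Fin N, ∑ q : Fin N,
            c21Mat N R L Linv i m p q * cMat N R L Linv p q j n)
        = ((CProof.L2mat N Linv * (CProof.L1mat N Linv *
              (CProof.RmatT N A R * (CProof.L2mat N L * CProof.L1mat N L)))) *
            (CProof.L1mat N Linv * (CProof.L2mat N Linv *
              (CProof.Rmat N A R * (CProof.L1mat N L * CProof.L2mat N L)))))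
            (i, m) (j, n) := by
          rw [Matrix.mul_apply, Fintype.sum_prod_type]
          exact Finset.sum_congr rfl fun p _ => Finset.sum_congr rfl fun q _ => by
            rw [CProof.cMat_eq (R := R), CProof.c21Mat_eq (R := R)]
      _ = (1 : Matrix (Fin N × Fin N) (Fin N × Fin N) A) (i, m) (j, n) := by rw [hCC']
      _ = if i = j ∧ m = n then 1 else 0 := by
          simp [Matrix.one_apply, Prod.ext_iff]
end
end

section
/- The second vertex coefficient T⁽²⁾∞₁₂ := I − R∞₂ + R∞₂R∞₁ − R₂₁R∞₁R₁₂ is S₂-covariant: T⁽²⁾∞₂₁ = R₁₂ T⁽²⁾∞₁₂ R₂₁, where T⁽²⁾∞₂₁ is obtained by swapping the labels 1 and 2 (i.e. I − R∞₁ + R∞₁R∞₂ − R₁₂R∞₂R₂₁), assuming R satisfies the Yang–Baxter equation and unitarity R₁₂R₂₁ = I. -/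
noncomputable section

/-- Operators on `ℂᴺ ⊗ ℂᴺ`, written in the standard basis `eᵢ ⊗ eⱼ`. -/
abbrev Mat2 (N : ℕ) := Matrix (Fin N × Fin N) (Fin N × Fin N) ℂ

/-- Operators on `ℂᴺ ⊗ ℂᴺ ⊗ ℂᴺ`. -/
abbrev Mat3 (N : ℕ) := Matrix (Fin N × Fin N × Fin N) (Fin N × Fin N × Fin N) ℂ

/-- The flip operator `P (v ⊗ w) = w ⊗ v` on `ℂᴺ ⊗ ℂᴺ`. -/
def flipP (N : ℕ) : Mat2 N :=
  Matrix.of fun x y => if x.1 = y.2 ∧ x.2 = y.1 then 1 else 0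

/-- `X₁₂` : an operator on `ℂᴺ ⊗ ℂᴺ` acting on factors 1 and 2 of the triple
tensor product. -/
def leg12 (N : ℕ) (R : Mat2 N) : Mat3 N :=
  Matrix.of fun x y => R (x.1, x.2.1) (y.1, y.2.1) * (if x.2.2 = y.2.2 then 1 else 0)

/-- `X₁₃` : acting on factors 1 and 3. -/
def leg13 (N : ℕ) (R : Mat2 N) : Mat3 N :=
  Matrix.of fun x y => R (x.1, x.2.2) (y.1, y.2.2) * (if x.2.1 = y.2.1 then 1 else 0)

/-- `X₂₃` : acting on factors 2 and 3. -/
def leg23 (N : ℕ) (R : Mat2 N) : Mat3 N :=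
  Matrix.of fun x y => R (x.2.1, x.2.2) (y.2.1, y.2.2) * (if x.1 = y.1 then 1 else 0)

set_option maxRecDepth 8000 in
lemma leg23_mul' (N : ℕ) (X Y : Mat2 N) :
    leg23 N X * leg23 N Y = leg23 N (X * Y) := by
  ext ⟨a, b⟩ ⟨c, d⟩
  simp only [Matrix.mul_apply, leg23, Matrix.of_apply, Fintype.sum_prod_type]
  rw [Finset.sum_eq_single a]
  · simp only [if_pos rfl, mul_one, Finset.sum_mul]
    refine Finset.sum_congr rfl fun j _ => ?_
    refine Finset.sum_congr rfl fun k _ => ?_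
    simp [mul_assoc]
  · intro i _ hi
    simp [Ne.symm hi]
  · simp

lemma leg23_one' (N : ℕ) : leg23 N 1 = 1 := by
  ext ⟨a, b⟩ ⟨c, d⟩
  simp only [leg23, Matrix.of_apply, Matrix.one_apply, mul_ite, mul_one, mul_zero]
  by_cases h : b = d
  · subst h; by_cases h2 : a = c <;> simp [h2, Prod.ext_iff]
  · simp [h, Prod.ext_iff]

/-- S₂-covariance of the second vertex coefficient
`T⁽²⁾∞₁₂ = I − R∞₂ + R∞₂ R∞₁ − R₂₁ R∞₁ R₁₂`, the legs `(∞,1,2)` being the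
three tensor factors of `ℂᴺ ⊗ ℂᴺ ⊗ ℂᴺ` in that order: swapping the labels
1 and 2 gives `T⁽²⁾∞₂₁ = R₁₂ T⁽²⁾∞₁₂ R₂₁`, where `R₂₁ = P R P`, assuming
the Yang–Baxter equation and unitarity `R₁₂ R₂₁ = I` for `R`. -/

theorem T2_S2_covariance (N : ℕ) (R : Mat2 N)
    (hYBE : leg12 N R * leg13 N R * leg23 N R = leg23 N R * leg13 N R * leg12 N R)
    (hU : R * (flipP N * R * flipP N) = 1) :
    (1 - leg12 N R + leg12 N R * leg13 N R -
        leg23 N R * leg13 N R * leg23 N (flipP N * R * flipP N)) =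
      leg23 N R *
        (1 - leg13 N R + leg13 N R * leg12 N R -
          leg23 N (flipP N * R * flipP N) * leg12 N R * leg23 N R) *
        leg23 N (flipP N * R * flipP N) := by
  set A := leg12 N R with hA
  set B := leg13 N R with hB
  set C := leg23 N R with hC
  set D := leg23 N (flipP N * R * flipP N) with hD
  have hCD : C * D = 1 := by
    rw [hC, hD, leg23_mul', hU, leg23_one']
  have key : A * B = C * (B * (A * D)) := by
    have h1 : A * B = A * B * C * D := by
      rw [mul_assoc (A * B), hCD, mul_one]
    rw [h1, hYBE, mul_assoc, mul_assoc]
  simp only [mul_sub, sub_mul, mul_add, add_mul, mul_one, one_mul, mul_assoc]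
  rw [key, hCD, mul_one, ← mul_assoc C D, hCD, one_mul]
  abel
end
end
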